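/- Let X be a uniformly smooth infinite-dimensional Banach space. Then K_a(X) > 1: there exist an infinite subset S of the unit ball of X and d > 1 such that for every pair of distinct x, y ∈ S there is f in the dual unit ball with d ≤ f(x) - f(y) and f(y) ≤ f(z) ≤ f(x) for all z ∈ S. -/

import Mathlib

set_option maxHeartbeats 1000000

open Set Filter

noncomputable section

/-- `S` is a `(c₁, c₂, d)`-bounded and separated antipodal subset of `X`. -/
def IsBSA (X : Type*) [NormedAddCommGroup X] [NormedSpace ℝ X] (S : Set X)
    (c₁ c₂ d : ℝ) : Prop :=
  (∀ x ∈ S, ‖x‖ ≤ c₁) ∧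
  ∀ x ∈ S, ∀ y ∈ S, x ≠ y → ∃ f : X →L[ℝ] ℝ, ‖f‖ ≤ c₂ ∧ d ≤ f y - f x ∧
    ∀ z ∈ S, f x ≤ f z ∧ f z ≤ f y

/-- The antipodal Kottman constant `K_a(X)`. -/
def Ka (X : Type*) [NormedAddCommGroup X] [NormedSpace ℝ X] : ℝ :=
  sSup {d : ℝ | ∃ S : Set X, S.Infinite ∧ IsBSA X S 1 1 d}

/-- The Kottman (separation) constant `K(X)`. -/
def Kc (X : Type*) [NormedAddCommGroup X] : ℝ :=
  sSup {d : ℝ | ∃ S : Set X, S ⊆ Metric.closedBall 0 1 ∧ S.Infinite ∧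
    ∀ x ∈ S, ∀ y ∈ S, x ≠ y → d ≤ ‖x - y‖}

section AuxLemmas

variable {X : Type*} [NormedAddCommGroup X] [NormedSpace ℝ X]

lemma exists_unit_ker (hinf : ¬FiniteDimensional ℝ X)
    (s : Finset (X × (X →L[ℝ] ℝ))) :
    ∃ y : X, ‖y‖ = 1 ∧ ∀ p ∈ s, p.2 y = 0 := by
  classical
  let Φ : X →ₗ[ℝ] (s → ℝ) :=
    LinearMap.pi (fun p => ((p : X × (X →L[ℝ] ℝ)).2 : X →ₗ[ℝ] ℝ))
  have hker : ∃ z : X, z ≠ 0 ∧ ∀ p ∈ s, p.2 z = 0 := by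
    by_contra hcon
    push_neg at hcon
    have hinj : Function.Injective Φ := by
      rw [← LinearMap.ker_eq_bot]
      by_contra hne
      obtain ⟨z, hz, hz0⟩ := Submodule.exists_mem_ne_zero_of_ne_bot hne
      obtain ⟨p, hp, hpz⟩ := hcon z hz0
      have : Φ z ⟨p, hp⟩ = 0 := by rw [hz]; rfl
      exact hpz this
    exact hinf (FiniteDimensional.of_injective Φ hinj)
  obtain ⟨z, hz0, hz⟩ := hker
  have hnz : ‖z‖ ≠ 0 := norm_ne_zero_iff.mpr hz0
  refine ⟨‖z‖⁻¹ • z, ?_, ?_⟩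
  · rw [norm_smul, norm_inv, norm_norm, inv_mul_cancel₀ hnz]
  · intro p hp
    rw [map_smul, hz p hp, smul_zero]

lemma exists_base_seq (hinf : ¬FiniteDimensional ℝ X) :
    ∃ (Y : ℕ → X) (F : ℕ → X →L[ℝ] ℝ),
      (∀ n, ‖Y n‖ = 1) ∧ (∀ n, ‖F n‖ ≤ 1) ∧ (∀ n, F n (Y n) = 1) ∧
      ∀ m n, m < n → F m (Y n) = 0 := by
  have hstep : ∀ s : Finset (X × (X →L[ℝ] ℝ)),
      (∀ p ∈ s, ‖p.1‖ = 1 ∧ ‖p.2‖ ≤ 1 ∧ p.2 p.1 = 1) →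
      ∃ q : X × (X →L[ℝ] ℝ), (‖q.1‖ = 1 ∧ ‖q.2‖ ≤ 1 ∧ q.2 q.1 = 1) ∧ ∀ p ∈ s, p.2 q.1 = 0 := by
    intro s _
    obtain ⟨y, hy1, hy0⟩ := exists_unit_ker hinf s
    have hy0' : y ≠ 0 := by
      intro h; rw [h, norm_zero] at hy1; norm_num at hy1
    obtain ⟨G, hG1, hGy⟩ := exists_dual_vector ℝ y (norm_ne_zero_iff.mpr hy0')
    have hGy' : G y = 1 := by rw [hGy, hy1]; norm_num
    exact ⟨(y, G), ⟨hy1, hG1.le, hGy'⟩, fun p hp => hy0 p hp⟩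
  obtain ⟨g, hg, hr⟩ := exists_seq_of_forall_finset_exists
    (fun p : X × (X →L[ℝ] ℝ) => ‖p.1‖ = 1 ∧ ‖p.2‖ ≤ 1 ∧ p.2 p.1 = 1)
    (fun p q => p.2 q.1 = 0) hstep
  exact ⟨fun n => (g n).1, fun n => (g n).2, fun n => (hg n).1, fun n => (hg n).2.1,
    fun n => (hg n).2.2, fun m n h => hr m n h⟩

lemma exists_cluster (Y : ℕ → X) (F : ℕ → X →L[ℝ] ℝ) (hF : ∀ n, ‖F n‖ ≤ 1) :
    ∃ h : X →L[ℝ] ℝ, ‖h‖ ≤ 1 ∧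
      ∀ (t : Finset ℕ) (ε : ℝ), 0 < ε → ∀ N : ℕ,
        ∃ n, N ≤ n ∧ ∀ a ∈ t, |F n (Y a) - h (Y a)| < ε := by
  classical
  set K : Set (WeakDual ℝ X) := WeakDual.toStrongDual ⁻¹' Metric.closedBall 0 1 with hK
  have hKc : IsCompact K := WeakDual.isCompact_closedBall (0 : StrongDual ℝ X) 1
  set u : ℕ → WeakDual ℝ X := fun n => StrongDual.toWeakDual (F n) with hu
  have hmem : ∀ n, u n ∈ K := by
    intro n
    simp only [hK, Set.mem_preimage, Metric.mem_closedBall, dist_zero_right]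
    exact hF n
  have hle : Filter.map u atTop ≤ Filter.principal K := by
    rw [Filter.le_principal_iff, Filter.mem_map]
    exact Filter.Eventually.of_forall hmem
  obtain ⟨φ, hφK, hφ⟩ := hKc.exists_clusterPt hle
  have hφnorm : ‖WeakDual.toStrongDual φ‖ ≤ 1 := by
    simpa [hK, Set.mem_preimage, Metric.mem_closedBall, dist_zero_right] using hφK
  refine ⟨WeakDual.toStrongDual φ, hφnorm, ?_⟩
  intro t ε hε N
  have hfreq : ∃ᶠ n in atTop, u n ∈ ⋂ a ∈ t,
      (fun ψ : WeakDual ℝ X => ψ (Y a)) ⁻¹' (Metric.ball (φ (Y a)) ε) := by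
    have hMCP : MapClusterPt φ atTop u := hφ
    refine (mapClusterPt_iff_frequently.mp hMCP) _ ?_
    have hopen : IsOpen (⋂ a ∈ t,
        (fun ψ : WeakDual ℝ X => ψ (Y a)) ⁻¹' (Metric.ball (φ (Y a)) ε)) := by
      refine isOpen_biInter_finset (fun a _ => ?_)
      exact (WeakDual.eval_continuous (Y a)).isOpen_preimage _ Metric.isOpen_ball
    refine hopen.mem_nhds ?_
    simp only [Set.mem_iInter, Set.mem_preimage, Metric.mem_ball]
    intro a _
    simp [hε]
  obtain ⟨n, hnN, hn⟩ := (Filter.frequently_atTop.mp hfreq) N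
  refine ⟨n, hnN, fun a ha => ?_⟩
  have := Set.mem_iInter₂.mp hn a ha
  simp only [Set.mem_preimage, Metric.mem_ball, Real.dist_eq] at this
  exact this

lemma dyadic_contradiction (Z : ℕ → X) (G : ℕ → X →L[ℝ] ℝ) (θ' δ₂ : ℝ)
    (hθ'pos : 0 < θ') (hθ'le : θ' ≤ 1) (hδ₂pos : 0 < δ₂) (hδ₂le : δ₂ ≤ 1)
    (hZ : ∀ s, ‖Z s‖ = 1) (hG : ∀ s, ‖G s‖ ≤ 1)
    (hdiag : ∀ s, G s (Z s) = 1) (htri : ∀ s t, s < t → G s (Z t) = 0)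
    (hlow : ∀ s t, s < t → θ' ≤ G t (Z s))
    (huc : ∀ u v : X →L[ℝ] ℝ, ‖u‖ ≤ 1 → ‖v‖ ≤ 1 → θ' ≤ ‖u - v‖ → ‖u + v‖ ≤ 2 - δ₂) :
    False := by
  classical
  set β : ℝ := 1 - δ₂ / 2 with hβ
  have hβpos : 0 < β := by rw [hβ]; linarith
  have hβlt : β < 1 := by rw [hβ]; linarith
  have hβle : β ≤ 1 := hβlt.le
  set T : ℕ → ℕ → (X →L[ℝ] ℝ) := fun m r => ∑ j ∈ Finset.range (2 ^ m), G (r * 2 ^ m + j)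
    with hT
  have hTapply : ∀ m r x, T m r x = ∑ j ∈ Finset.range (2 ^ m), G (r * 2 ^ m + j) x := by
    intro m r x
    simp [hT, ContinuousLinearMap.sum_apply]
  have hTeval_lower : ∀ m r, (2 : ℝ) ^ m * θ' ≤ T m r (Z (r * 2 ^ m)) := by
    intro m r
    rw [hTapply]
    have hterm : ∀ j ∈ Finset.range (2 ^ m), θ' ≤ G (r * 2 ^ m + j) (Z (r * 2 ^ m)) := by
      intro j hj
      rcases Nat.eq_zero_or_pos j with h0 | hpos
      · subst h0
        rw [Nat.add_zero, hdiag]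
        exact hθ'le
      · exact hlow _ _ (by omega)
    calc (2 : ℝ) ^ m * θ' = ∑ _j ∈ Finset.range (2 ^ m), θ' := by
          rw [Finset.sum_const, Finset.card_range, nsmul_eq_mul]
          push_cast
          ring
      _ ≤ _ := Finset.sum_le_sum hterm
  have hTeval_zero : ∀ m r q, r * 2 ^ m + 2 ^ m ≤ q → T m r (Z q) = 0 := by
    intro m r q hq
    rw [hTapply]
    apply Finset.sum_eq_zero
    intro j hj
    exact htri _ _ (by have := Finset.mem_range.mp hj; omega)
  have hTsplit : ∀ m r, T (m + 1) r = T m (2 * r) + T m (2 * r + 1) := by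
    intro m r
    have h2 : (2 : ℕ) ^ (m + 1) = 2 ^ m + 2 ^ m := by ring
    rw [hT]
    simp only
    rw [h2, Finset.sum_range_add]
    congr 1
    · apply Finset.sum_congr rfl
      intro j _
      congr 1
      ring
    · apply Finset.sum_congr rfl
      intro j _
      congr 1
      ring
  have hTnorm : ∀ m r, ‖T m r‖ ≤ 2 ^ m * β ^ m := by
    intro m
    induction m with
    | zero =>
      intro r
      simpa [hT] using hG r
    | succ m ih =>
      intro r
      set c : ℝ := 2 ^ m * β ^ m with hc
      have hcpos : 0 < c := by positivity
      set u := c⁻¹ • T m (2 * r) with hu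
      set v := c⁻¹ • T m (2 * r + 1) with hv
      have hnorm_aux : ∀ w : X →L[ℝ] ℝ, ‖w‖ ≤ c → ‖c⁻¹ • w‖ ≤ 1 := by
        intro w hw
        have h1 : ‖c⁻¹ • w‖ = ‖(c⁻¹ : ℝ)‖ * ‖w‖ := norm_smul (β := X →L[ℝ] ℝ) _ _
        rw [h1, norm_inv, Real.norm_of_nonneg hcpos.le, inv_mul_le_iff₀ hcpos]
        linarith
      have hunorm : ‖u‖ ≤ 1 := hnorm_aux _ (ih (2 * r))
      have hvnorm : ‖v‖ ≤ 1 := hnorm_aux _ (ih (2 * r + 1))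
      have hsep : θ' ≤ ‖u - v‖ := by
        set pt := Z ((2 * r + 1) * 2 ^ m) with hpt
        have hupt : u pt = 0 := by
          rw [hu, ContinuousLinearMap.smul_apply, hpt,
            hTeval_zero m (2 * r) ((2 * r + 1) * 2 ^ m) (by ring_nf; omega), smul_zero]
        have hvpt : θ' ≤ v pt := by
          rw [hv, ContinuousLinearMap.smul_apply, hpt, smul_eq_mul]
          have h1 := hTeval_lower m (2 * r + 1)
          calc θ' = c⁻¹ * (c * θ') := by field_simp
            _ ≤ c⁻¹ * T m (2 * r + 1) (Z ((2 * r + 1) * 2 ^ m)) := by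
                apply mul_le_mul_of_nonneg_left _ (inv_nonneg.mpr hcpos.le)
                calc c * θ' ≤ (2 : ℝ) ^ m * θ' := by
                      apply mul_le_mul_of_nonneg_right _ hθ'pos.le
                      rw [hc]
                      nlinarith [pow_pos (show (0:ℝ) < 2 by norm_num) m,
                        pow_le_one₀ hβpos.le hβle (n := m)]
                  _ ≤ _ := h1
        have habs : θ' ≤ (v - u) pt := by
          rw [ContinuousLinearMap.sub_apply, hupt, sub_zero]
          exact hvpt
        have := (v - u).le_opNorm pt
        rw [hpt, hZ, mul_one] at this
        have h2 : θ' ≤ ‖v - u‖ := le_trans habs (le_trans (le_abs_self _) this)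
        rwa [norm_sub_rev] at h2
      have hucuv := huc u v hunorm hvnorm hsep
      have hTc : T (m + 1) r = c • (u + v) := by
        rw [hTsplit, hu, hv, smul_add, smul_inv_smul₀ hcpos.ne', smul_inv_smul₀ hcpos.ne']
      calc ‖T (m + 1) r‖ = c * ‖u + v‖ := by
            rw [hTc]
            rw [show ‖c • (u + v)‖ = ‖(c:ℝ)‖ * ‖u + v‖ from norm_smul (β := X →L[ℝ] ℝ) _ _,
              Real.norm_of_nonneg hcpos.le]
        _ ≤ c * (2 - δ₂) := mul_le_mul_of_nonneg_left hucuv hcpos.le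
        _ = 2 ^ (m + 1) * β ^ (m + 1) := by
            rw [hc, hβ, pow_succ, pow_succ]
            ring
  obtain ⟨m, hm⟩ := exists_pow_lt_of_lt_one hθ'pos hβlt
  have h1 : (2 : ℝ) ^ m * θ' ≤ ‖T m 0‖ := by
    have h2 := hTeval_lower m 0
    have h3 := (T m 0).le_opNorm (Z (0 * 2 ^ m))
    rw [hZ, mul_one] at h3
    exact le_trans h2 (le_trans (le_abs_self _) h3)
  have h2 := hTnorm m 0
  have h2m : (0 : ℝ) < 2 ^ m := by positivity
  nlinarith

end AuxLemmas

/-- If X is an infinite-dimensional uniformly smooth Banach space (i.e. its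
dual is uniformly convex), then K_a(X) > 1. -/
theorem stmt7 {X : Type*} [NormedAddCommGroup X] [NormedSpace ℝ X]
    [CompleteSpace X] [UniformConvexSpace (X →L[ℝ] ℝ)]
    (hinf : ¬FiniteDimensional ℝ X) :
    1 < Ka X ∧ ∃ S : Set X, S.Infinite ∧ ∃ d : ℝ, 1 < d ∧ IsBSA X S 1 1 d := by
  classical
  obtain ⟨δ₀, hδ₀, hδuc⟩ := exists_forall_closed_ball_dist_add_le_two_sub (X →L[ℝ] ℝ) one_pos
  set δ : ℝ := min δ₀ 1 with hδdef
  have hδpos : 0 < δ := lt_min hδ₀ one_pos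
  have hδle1 : δ ≤ 1 := min_le_right _ _
  have huc : ∀ u v : X →L[ℝ] ℝ, ‖u‖ ≤ 1 → ‖v‖ ≤ 1 → (1:ℝ) ≤ ‖u - v‖ → ‖u + v‖ ≤ 2 - δ := by
    intro u v hu hv h1
    have := hδuc hu hv h1
    have h2 : δ ≤ δ₀ := min_le_left _ _
    linarith
  set θ : ℝ := δ / 4 with hθdef
  set ε : ℝ := δ / 100 with hεdef
  have hεpos : 0 < ε := by rw [hεdef]; linarith
  obtain ⟨Y, F, hY1, hF1, hFdiag, hFtri⟩ := exists_base_seq hinf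
  obtain ⟨h, hh1, hclu⟩ := exists_cluster Y F hF1
  -- extraction of a subsequence along which the cluster values are good approximations
  have hext : ∀ s : Finset ℕ, (∀ x ∈ s, True) → ∃ b : ℕ, True ∧
      ∀ a ∈ s, a < b ∧ |F b (Y a) - h (Y a)| ≤ ε := by
    intro t _
    obtain ⟨n, hn, hnt⟩ := hclu t ε hεpos ((t.sup id) + 1)
    refine ⟨n, trivial, fun a ha => ⟨?_, (hnt a ha).le⟩⟩
    have : a ≤ t.sup id := Finset.le_sup (f := id) ha
    omega
  obtain ⟨g, -, hg⟩ := exists_seq_of_forall_finset_exists (fun _ : ℕ => True)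
    (fun a b => a < b ∧ |F b (Y a) - h (Y a)| ≤ ε) hext
  have hgmono : StrictMono g := fun a b hab => (hg a b hab).1
  set Z0 : ℕ → X := fun s => Y (g s) with hZ0
  set G0 : ℕ → X →L[ℝ] ℝ := fun s => F (g s) with hG0
  set γ : ℕ → ℝ := fun s => h (Z0 s) with hγdef
  have hZnorm : ∀ s, ‖Z0 s‖ = 1 := fun s => hY1 _
  have hGnorm : ∀ s, ‖G0 s‖ ≤ 1 := fun s => hF1 _
  have hdiag : ∀ s, G0 s (Z0 s) = 1 := fun s => hFdiag _
  have htri : ∀ s t, s < t → G0 s (Z0 t) = 0 := fun s t hst => hFtri _ _ (hgmono hst)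
  have happ : ∀ s t, s < t → |G0 t (Z0 s) - γ s| ≤ ε := fun s t hst => (hg s t hst).2
  have eval_le : ∀ (ψ : X →L[ℝ] ℝ) (s : ℕ), |ψ (Z0 s)| ≤ ‖ψ‖ := by
    intro ψ s
    have := ψ.le_opNorm (Z0 s)
    rwa [hZnorm, mul_one] at this
  -- difference norms are bounded away from 2
  have hdiff : ∀ s t, s < t → ‖G0 t - G0 s‖ ≤ 2 - δ := by
    intro s t hst
    have h1 : (1:ℝ) ≤ ‖G0 s - -G0 t‖ := by
      have he : (G0 s - -G0 t) (Z0 t) = 1 := by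
        simp [ContinuousLinearMap.sub_apply, ContinuousLinearMap.neg_apply,
          htri s t hst, hdiag t]
      calc (1:ℝ) = (G0 s - -G0 t) (Z0 t) := he.symm
        _ ≤ |(G0 s - -G0 t) (Z0 t)| := le_abs_self _
        _ ≤ ‖G0 s - -G0 t‖ := eval_le _ _
    have h2 := huc (G0 s) (-G0 t) (hGnorm s) (by simpa using hGnorm t) h1
    have h3 : G0 s + -G0 t = -(G0 t - G0 s) := by abel
    rw [h3, norm_neg] at h2
    exact h2
  -- lower bound on the cluster values
  have hγlow : ∀ s, -1 + δ/2 - ε ≤ γ s := by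
    intro s
    have h1 : (1:ℝ) ≤ ‖G0 (s+1) - G0 (s+2)‖ := by
      have he : (G0 (s+1) - G0 (s+2)) (Z0 (s+2)) = -1 := by
        simp [ContinuousLinearMap.sub_apply, htri (s+1) (s+2) (by omega), hdiag (s+2)]
      have := eval_le (G0 (s+1) - G0 (s+2)) (s+2)
      rw [he] at this
      simpa using this
    have h2 := huc (G0 (s+1)) (G0 (s+2)) (hGnorm (s+1)) (hGnorm (s+2)) h1
    have h3 := eval_le (G0 (s+1) + G0 (s+2)) s
    have h4 : -(2 - δ) ≤ (G0 (s+1) + G0 (s+2)) (Z0 s) := by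
      have := (abs_le.mp (h3.trans h2)).1
      linarith
    have a1 := (abs_le.mp (happ s (s+1) (by omega))).1
    have a2 := (abs_le.mp (happ s (s+2) (by omega))).1
    have a1' := (abs_le.mp (happ s (s+1) (by omega))).2
    have a2' := (abs_le.mp (happ s (s+2) (by omega))).2
    have h5 : (G0 (s+1) + G0 (s+2)) (Z0 s) = G0 (s+1) (Z0 s) + G0 (s+2) (Z0 s) := by
      simp [ContinuousLinearMap.add_apply]
    rw [h5] at h4
    linarith
  -- upper bound: eventually γ s < θ
  have hγupper : ∀ᶠ s in atTop, γ s < θ := by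
    by_contra hcon
    rw [Filter.not_eventually] at hcon
    have hfr : ∃ᶠ s in atTop, θ ≤ γ s := hcon.mono (fun x hx => not_lt.mp hx)
    obtain ⟨φ, hφmono, hφ⟩ := Filter.extraction_of_frequently_atTop hfr
    have hθ'pos : 0 < θ - ε := by rw [hθdef, hεdef]; linarith
    obtain ⟨δ₂r, hδ₂rpos, hδ₂r⟩ :=
      exists_forall_closed_ball_dist_add_le_two_sub (X →L[ℝ] ℝ) hθ'pos
    refine dyadic_contradiction (fun s => Z0 (φ s)) (fun s => G0 (φ s)) (θ - ε) (min δ₂r 1)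
      hθ'pos (by rw [hθdef, hεdef]; linarith) (lt_min hδ₂rpos one_pos) (min_le_right _ _)
      (fun s => hZnorm _) (fun s => hGnorm _) (fun s => hdiag _)
      (fun s t hst => htri _ _ (hφmono hst)) ?_ ?_
    · intro s t hst
      have h1 := (abs_le.mp (happ (φ s) (φ t) (hφmono hst))).1
      have h2 := hφ s
      linarith
    · intro u v hu hv hsep
      have := hδ₂r hu hv hsep
      have h2 : min δ₂r 1 ≤ δ₂r := min_le_left _ _
      linarith
  obtain ⟨N, hN⟩ := Filter.eventually_atTop.mp hγupper
  -- the key pairwise estimates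
  have hpair : ∀ p q : ℕ, N ≤ p → p < q →
      (∀ k, N ≤ k →
        (G0 q) (Z0 p) - (G0 p) (Z0 p) ≤ (G0 q) (Z0 k) - (G0 p) (Z0 k) ∧
        (G0 q) (Z0 k) - (G0 p) (Z0 k) ≤ (G0 q) (Z0 q) - (G0 p) (Z0 q)) ∧
      2 - θ - ε ≤ ((G0 q) (Z0 q) - (G0 p) (Z0 q)) - ((G0 q) (Z0 p) - (G0 p) (Z0 p)) := by
    intro p q hNp hpq
    have hγp : γ p < θ := hN p hNp
    have hCp := abs_le.mp (happ p q hpq)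
    have hdp : G0 p (Z0 p) = 1 := hdiag p
    have hdq : G0 q (Z0 q) = 1 := hdiag q
    have hpq0 : G0 p (Z0 q) = 0 := htri p q hpq
    have hWp_ub : (G0 q) (Z0 p) - (G0 p) (Z0 p) ≤ θ + ε - 1 := by
      rw [hdp]; linarith [hCp.2]
    constructor
    · intro k hNk
      have hγk : γ k < θ := hN k hNk
      have hγklow := hγlow k
      rcases lt_trichotomy k p with hkp | hkp | hkp
      · -- k < p : both values within ε of γ k
        have c1 := abs_le.mp (happ k p hkp)
        have c2 := abs_le.mp (happ k q (lt_trans hkp hpq))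
        constructor
        · rw [hdp]
          have : θ + 3*ε ≤ 1 := by rw [hθdef, hεdef]; linarith
          linarith [hCp.2]
        · rw [hdq, hpq0]
          have : θ + 3*ε ≤ 1 := by rw [hθdef, hεdef]; linarith
          linarith
      · subst hkp
        constructor
        · linarith
        · rw [hdq, hpq0, hdp]
          linarith [hCp.2, hγp]
      · rcases lt_trichotomy k q with hkq | hkq | hkq
        · -- p < k < q
          have c0 : G0 p (Z0 k) = 0 := htri p k hkp
          have c2 := abs_le.mp (happ k q hkq)
          constructor
          · rw [hdp, c0]
            have : θ + 3*ε ≤ δ/2 := by rw [hθdef, hεdef]; linarith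
            linarith [hCp.2]
          · rw [hdq, hpq0, c0]
            have : θ + ε ≤ 1 := by rw [hθdef, hεdef]; linarith
            linarith
        · subst hkq
          constructor
          · rw [hdp, hdq, hpq0]
            linarith [hCp.2]
          · linarith
        · -- q < k
          have c0 : G0 p (Z0 k) = 0 := htri p k hkp
          have c1 : G0 q (Z0 k) = 0 := htri q k hkq
          constructor
          · rw [hdp, c0, c1]
            linarith [hCp.2]
          · rw [hdq, hpq0, c0, c1]
            linarith
    · rw [hdp, hdq, hpq0]
      linarith [hCp.2]
  -- the final set
  set ZZ : ℕ → X := fun t => Z0 (N + t) with hZZ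
  have hZinj : Function.Injective ZZ := by
    intro a b hab
    by_contra hne
    have h1 : N + a ≠ N + b := by omega
    rcases lt_or_gt_of_ne h1 with hlt | hgt
    · have e0 := htri (N + a) (N + b) hlt
      have e1 := hdiag (N + a)
      rw [hZZ] at hab
      simp only at hab
      rw [hab] at e1
      rw [e0] at e1
      norm_num at e1
    · have e0 := htri (N + b) (N + a) hgt
      have e1 := hdiag (N + b)
      rw [hZZ] at hab
      simp only at hab
      rw [← hab] at e1
      rw [e0] at e1
      norm_num at e1
  set S : Set X := Set.range ZZ with hSdef
  have hSinf : S.Infinite := Set.infinite_range_of_injective hZinj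
  set d : ℝ := (2 - θ - 4*ε) / (2 - δ) with hddef
  have h2δ : (0:ℝ) < 2 - δ := by linarith
  have hd1 : 1 < d := by
    rw [hddef, lt_div_iff₀ h2δ]
    rw [hθdef, hεdef]
    linarith
  have hfnorm : ∀ p q : ℕ, p < q → ‖(2 - δ)⁻¹ • (G0 q - G0 p)‖ ≤ 1 := by
    intro p q hpq
    have h1 : ‖(2 - δ)⁻¹ • (G0 q - G0 p)‖ = ‖((2 - δ)⁻¹ : ℝ)‖ * ‖G0 q - G0 p‖ :=
      norm_smul (β := X →L[ℝ] ℝ) _ _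
    rw [h1, norm_inv, Real.norm_of_nonneg h2δ.le, inv_mul_le_iff₀ h2δ]
    have := hdiff p q hpq
    linarith
  have hbsa : IsBSA X S 1 1 d := by
    constructor
    · rintro x ⟨t, rfl⟩
      exact (hZnorm _).le
    · rintro x ⟨a, rfl⟩ y ⟨b, rfl⟩ hxy
      have hab : N + a ≠ N + b := by
        intro hcon
        exact hxy (by rw [hZZ]; simp only; rw [hcon])
      have happly : ∀ (c : ℝ) (ψ ψ' : X →L[ℝ] ℝ) (z : X),
          (c • (ψ - ψ')) z = c * (ψ z - ψ' z) := by
        intro c ψ ψ' z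
        simp [ContinuousLinearMap.smul_apply, ContinuousLinearMap.sub_apply, smul_eq_mul]
      rcases lt_or_gt_of_ne hab with hlt | hgt
      · -- N + a < N + b
        obtain ⟨hsand, hgap⟩ := hpair (N + a) (N + b) (by omega) hlt
        refine ⟨(2 - δ)⁻¹ • (G0 (N + b) - G0 (N + a)), hfnorm _ _ hlt, ?_, ?_⟩
        · rw [happly, happly]
          have hgap2 : 2 - θ - 4*ε ≤
              ((G0 (N+b)) (Z0 (N+b)) - (G0 (N+a)) (Z0 (N+b))) -
              ((G0 (N+b)) (Z0 (N+a)) - (G0 (N+a)) (Z0 (N+a))) := by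
            have : 0 < ε := hεpos
            linarith
          rw [hddef]
          rw [div_le_iff₀ h2δ]
          have hrw : (2 - δ)⁻¹ * ((G0 (N+b)) (ZZ b) - (G0 (N+a)) (ZZ b)) -
              (2 - δ)⁻¹ * ((G0 (N+b)) (ZZ a) - (G0 (N+a)) (ZZ a)) =
              (2 - δ)⁻¹ * (((G0 (N+b)) (Z0 (N+b)) - (G0 (N+a)) (Z0 (N+b))) -
              ((G0 (N+b)) (Z0 (N+a)) - (G0 (N+a)) (Z0 (N+a)))) := by
            rw [hZZ]; ring_nf
          rw [hrw]
          have hcancel : ∀ A : ℝ, (2 - δ)⁻¹ * A * (2 - δ) = A := by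
            intro A; field_simp
          rw [hcancel]
          linarith
        · rintro z ⟨k, rfl⟩
          obtain ⟨hs1, hs2⟩ := hsand (N + k) (by omega)
          rw [happly, happly, happly]
          constructor
          · apply mul_le_mul_of_nonneg_left _ (inv_nonneg.mpr h2δ.le)
            exact hs1
          · apply mul_le_mul_of_nonneg_left _ (inv_nonneg.mpr h2δ.le)
            exact hs2
      · -- N + b < N + a
        obtain ⟨hsand, hgap⟩ := hpair (N + b) (N + a) (by omega) hgt
        refine ⟨(2 - δ)⁻¹ • (G0 (N + b) - G0 (N + a)), ?_, ?_, ?_⟩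
        · have h1 : G0 (N + b) - G0 (N + a) = -(G0 (N + a) - G0 (N + b)) := by abel
          rw [h1]
          have h2 : ‖(2 - δ)⁻¹ • -(G0 (N+a) - G0 (N+b))‖ =
              ‖(2 - δ)⁻¹ • (G0 (N+a) - G0 (N+b))‖ := by
            rw [smul_neg, norm_neg]
          rw [h2]
          exact hfnorm _ _ hgt
        · rw [happly, happly]
          rw [hddef, div_le_iff₀ h2δ]
          have hrw : (2 - δ)⁻¹ * ((G0 (N+b)) (ZZ b) - (G0 (N+a)) (ZZ b)) -
              (2 - δ)⁻¹ * ((G0 (N+b)) (ZZ a) - (G0 (N+a)) (ZZ a)) =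
              (2 - δ)⁻¹ * (((G0 (N+a)) (Z0 (N+a)) - (G0 (N+b)) (Z0 (N+a))) -
              ((G0 (N+a)) (Z0 (N+b)) - (G0 (N+b)) (Z0 (N+b)))) := by
            rw [hZZ]; ring_nf
          rw [hrw]
          have hcancel : ∀ A : ℝ, (2 - δ)⁻¹ * A * (2 - δ) = A := by
            intro A; field_simp
          rw [hcancel]
          have : 0 < ε := hεpos
          linarith
        · rintro z ⟨k, rfl⟩
          obtain ⟨hs1, hs2⟩ := hsand (N + k) (by omega)
          rw [happly, happly, happly]
          constructor
          · apply mul_le_mul_of_nonneg_left _ (inv_nonneg.mpr h2δ.le)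
            rw [hZZ]
            simp only
            linarith
          · apply mul_le_mul_of_nonneg_left _ (inv_nonneg.mpr h2δ.le)
            rw [hZZ]
            simp only
            linarith
  -- conclude
  have hmem : d ∈ {d' : ℝ | ∃ S : Set X, S.Infinite ∧ IsBSA X S 1 1 d'} := ⟨S, hSinf, hbsa⟩
  have hbdd : BddAbove {d' : ℝ | ∃ S : Set X, S.Infinite ∧ IsBSA X S 1 1 d'} := by
    refine ⟨2, ?_⟩
    rintro d' ⟨S', hS'inf, hS'b⟩
    obtain ⟨x, hx, y, hy, hxy⟩ := hS'inf.nontrivial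
    obtain ⟨f, hf, hgap, -⟩ := hS'b.2 x hx y hy hxy
    have h1 : |f y| ≤ 1 := by
      have := f.le_opNorm y
      have h2 := hS'b.1 y hy
      calc |f y| ≤ ‖f‖ * ‖y‖ := this
        _ ≤ 1 * 1 := by
          apply mul_le_mul hf h2 (norm_nonneg _) (by linarith [norm_nonneg f])
        _ = 1 := by norm_num
    have h2 : |f x| ≤ 1 := by
      have := f.le_opNorm x
      have h3 := hS'b.1 x hx
      calc |f x| ≤ ‖f‖ * ‖x‖ := this
        _ ≤ 1 * 1 := by
          apply mul_le_mul hf h3 (norm_nonneg _) (by linarith [norm_nonneg f])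
        _ = 1 := by norm_num
    have := abs_le.mp h1
    have := abs_le.mp h2
    linarith [(abs_le.mp h1).1, (abs_le.mp h1).2, (abs_le.mp h2).1, (abs_le.mp h2).2]
  have hKa : d ≤ Ka X := le_csSup hbdd hmem
  exact ⟨lt_of_lt_of_le hd1 hKa, S, hSinf, d, hd1, hbsa⟩
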